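/- arXiv:0809.5008 — 4 statements merged into one kernel-verified Lean document; each statement's English description precedes it below -/
import Mathlib

section
/- For integers i and real α with 2 < α and i > ⌈α/2⌉, the ratio of Gamma functions satisfies Γ(i − α/2)/Γ(i) < (i − ⌈α/2⌉)^{−α/2}. -/
open Real

/-- Log-convexity consequence: for `1 ≤ N` and `0 ≤ s < 1`, `Γ(N+s) ≤ Γ(N) * N^s`. -/
lemma aux_gamma_interp {N s : ℝ} (hN : 1 ≤ N) (hs0 : 0 ≤ s) (hs1 : s < 1) :
    Real.Gamma (N + s) ≤ Real.Gamma N * N ^ s := by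
  have hNpos : 0 < N := lt_of_lt_of_le one_pos hN
  have hG : 0 < Real.Gamma N := Real.Gamma_pos_of_pos hNpos
  rcases eq_or_lt_of_le hs0 with h | h
  · rw [← h, add_zero, Real.rpow_zero, mul_one]
  · have key := Real.Gamma_mul_add_mul_le_rpow_Gamma_mul_rpow_Gamma
      (s := N) (t := N + 1) (a := 1 - s) (b := s) hNpos (by linarith) (by linarith) h
      (by ring)
    have h1 : (1 - s) * N + s * (N + 1) = N + s := by ring
    rw [h1, Real.Gamma_add_one (ne_of_gt hNpos)] at key
    calc Real.Gamma (N + s) ≤ Real.Gamma N ^ (1 - s) * (N * Real.Gamma N) ^ s := key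
      _ = Real.Gamma N * N ^ s := by
          rw [Real.mul_rpow hNpos.le hG.le, Real.rpow_sub hG, Real.rpow_one]
          field_simp

/-- For `1 ≤ N` and `2 ≤ m`, `Γ(N) * N^m < Γ(N+m)`. -/
lemma aux_gamma_shift {N : ℝ} (hN : 1 ≤ N) : ∀ m : ℕ, 2 ≤ m →
    Real.Gamma N * N ^ m < Real.Gamma (N + m) := by
  have hNpos : 0 < N := lt_of_lt_of_le one_pos hN
  have hG : 0 < Real.Gamma N := Real.Gamma_pos_of_pos hNpos
  intro m hm
  induction m with
  | zero => omega
  | succ n ih =>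
    rcases Nat.lt_or_ge n 2 with h2 | h2
    · interval_cases n
      · omega
      · -- m = 2
        have : Real.Gamma (N + 2) = (N + 1) * (N * Real.Gamma N) := by
          have h1 : N + 2 = (N + 1) + 1 := by ring
          rw [h1, Real.Gamma_add_one (by linarith), Real.Gamma_add_one (ne_of_gt hNpos)]
        push_cast
        rw [this]
        have : N ^ (2:ℕ) = N * N := sq N
        nlinarith
    · have ih' := ih h2
      have hstep : Real.Gamma (N + (n + 1 : ℕ)) = (N + n) * Real.Gamma (N + n) := by
        push_cast
        rw [show N + ((n:ℝ) + 1) = (N + n) + 1 by ring,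
          Real.Gamma_add_one (by positivity)]
      rw [hstep]
      have hpow : N ^ (n + 1) = N * N ^ n := by ring
      rw [hpow]
      have hNn : N ≤ N + n := by
        have : (0:ℝ) ≤ n := Nat.cast_nonneg n
        linarith
      have hpown : 0 < Real.Gamma N * N ^ n := by positivity
      calc Real.Gamma N * (N * N ^ n) = N * (Real.Gamma N * N ^ n) := by ring
        _ < (N + n) * Real.Gamma (N + n) :=
            mul_lt_mul' hNn ih' hpown.le (by positivity)
      
/-- For α > 2 and an integer i > ⌈α / 2⌉, Γ(i − α/2)/Γ(i) < (i − ⌈α/2⌉)^(−α/2). -/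
theorem gamma_ratio_lt (α : ℝ) (hα : 2 < α) (i : ℤ) (hi : ⌈α / 2⌉ < i) :
    Real.Gamma ((i : ℝ) - α / 2) / Real.Gamma (i : ℝ) <
      ((i : ℝ) - (⌈α / 2⌉ : ℤ)) ^ (-(α / 2)) := by
  set c : ℝ := α / 2 with hc
  have hc1 : 1 < c := by rw [hc]; linarith
  set k : ℤ := ⌈c⌉ with hk
  have hk2 : 2 ≤ k := by
    have : (1:ℤ) < ⌈c⌉ := Int.lt_ceil.mpr (by push_cast; exact hc1)
    omega
  -- m := (i - k).toNat, with i = k + m, m ≥ 1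
  set m : ℕ := (i - k).toNat with hm
  have hm1 : 1 ≤ m := by omega
  have him : i = k + m := by omega
  set N : ℝ := (m : ℝ) with hN
  have hN1 : 1 ≤ N := by rw [hN]; exact_mod_cast hm1
  have hNpos : 0 < N := lt_of_lt_of_le one_pos hN1
  set s : ℝ := (k : ℝ) - c with hs
  have hs0 : 0 ≤ s := by
    have := Int.le_ceil c
    rw [hs]; linarith
  have hs1 : s < 1 := by
    have := Int.ceil_lt_add_one c
    rw [hs]; linarith
  have hiR : (i : ℝ) = N + (k : ℝ) := by
    rw [him, hN]; push_cast; ring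
  have hkm : ∃ kn : ℕ, (k : ℤ) = (kn : ℤ) ∧ 2 ≤ kn := ⟨k.toNat, by omega, by omega⟩
  obtain ⟨kn, hkn, hkn2⟩ := hkm
  have hG : 0 < Real.Gamma N := Real.Gamma_pos_of_pos hNpos
  have hA : Real.Gamma ((i:ℝ) - c) ≤ Real.Gamma N * N ^ s := by
    have : (i:ℝ) - c = N + s := by rw [hiR, hs]; ring
    rw [this]
    exact aux_gamma_interp hN1 hs0 hs1
  have hB : Real.Gamma N * N ^ kn < Real.Gamma (i : ℝ) := by
    have : (i:ℝ) = N + kn := by rw [hiR, hkn]; push_cast; ring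
    rw [this]
    exact aux_gamma_shift hN1 kn hkn2
  have hBpos : 0 < Real.Gamma N * N ^ kn := by positivity
  have hGi : 0 < Real.Gamma (i : ℝ) := lt_trans hBpos hB
  have hApos : 0 < Real.Gamma N * N ^ s := by positivity
  have step1 : Real.Gamma ((i:ℝ) - c) / Real.Gamma (i:ℝ)
      ≤ (Real.Gamma N * N ^ s) / Real.Gamma (i:ℝ) := by gcongr
  have step2 : (Real.Gamma N * N ^ s) / Real.Gamma (i:ℝ)
      < (Real.Gamma N * N ^ s) / (Real.Gamma N * N ^ kn) :=
    div_lt_div_of_pos_left hApos hBpos hB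
  have step3 : (Real.Gamma N * N ^ s) / (Real.Gamma N * N ^ kn) = N ^ (-c) := by
    rw [mul_div_mul_left _ _ (ne_of_gt hG), ← Real.rpow_natCast N kn,
      ← Real.rpow_sub hNpos]
    congr 1
    have hkR : (k:ℝ) = (kn:ℝ) := by exact_mod_cast hkn
    rw [hs, hkR]
    ring
  have hNeq : ((i : ℝ) - (k : ℤ)) = N := by rw [hiR]; ring
  calc Real.Gamma ((i : ℝ) - α / 2) / Real.Gamma (i : ℝ)
      = Real.Gamma ((i:ℝ) - c) / Real.Gamma (i:ℝ) := by rw [hc]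
    _ ≤ (Real.Gamma N * N ^ s) / Real.Gamma (i:ℝ) := step1
    _ < (Real.Gamma N * N ^ s) / (Real.Gamma N * N ^ kn) := step2
    _ = N ^ (-c) := step3
    _ = ((i : ℝ) - (⌈α / 2⌉ : ℤ)) ^ (-(α / 2)) := by rw [hNeq, hc]
end

section
/- Let α > 2 be real and k an integer with k > ⌈α/2⌉. Then the series ∑_{i=k+1}^∞ Γ(i − α/2)/Γ(i) converges and is bounded above by (α/2 − 1)^{−1} (k − ⌈α/2⌉)^{1−α/2}. -/
open Real

private lemma gamma_aux_A {x θ : ℝ} (hx : 0 < x) (hθ : 0 ≤ θ) (hθ1 : θ ≤ 1) :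
    Real.Gamma (x + θ) ≤ Real.Gamma x * x ^ θ := by
  rcases eq_or_lt_of_le hθ with h0 | h0
  · simp [← h0]
  rcases eq_or_lt_of_le hθ1 with h1 | h1
  · rw [h1, Real.rpow_one, Real.Gamma_add_one hx.ne', mul_comm]
  have key := Real.Gamma_mul_add_mul_le_rpow_Gamma_mul_rpow_Gamma hx
    (by linarith : (0:ℝ) < x + 1) (by linarith : (0:ℝ) < 1 - θ) h0 (by ring)
  have harg : (1 - θ) * x + θ * (x + 1) = x + θ := by ring
  rw [harg, Real.Gamma_add_one hx.ne'] at key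
  have hΓ : 0 < Real.Gamma x := Real.Gamma_pos_of_pos hx
  calc Real.Gamma (x + θ) ≤ Real.Gamma x ^ (1 - θ) * (x * Real.Gamma x) ^ θ := key
    _ = Real.Gamma x * x ^ θ := by
        rw [Real.mul_rpow hx.le hΓ.le, ← mul_assoc, mul_comm (Real.Gamma x ^ (1-θ)),
          mul_assoc, ← Real.rpow_add hΓ]
        simp [mul_comm]

private lemma gamma_aux_B {x : ℝ} (hx : 0 < x) (M : ℕ) :
    Real.Gamma x * x ^ M ≤ Real.Gamma (x + M) := by
  induction M with
  | zero => simp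
  | succ M ih =>
    have h1 : (x + (M + 1 : ℕ)) = (x + M) + 1 := by push_cast; ring
    rw [h1, Real.Gamma_add_one (by positivity)]
    calc Real.Gamma x * x ^ (M + 1) = x * (Real.Gamma x * x ^ M) := by ring
      _ ≤ x * Real.Gamma (x + M) := by
          exact mul_le_mul_of_nonneg_left ih hx.le
      _ ≤ (x + M) * Real.Gamma (x + M) := by
          have := (Real.Gamma_pos_of_pos (by positivity : (0:ℝ) < x + M)).le
          nlinarith [Nat.cast_nonneg (α := ℝ) M]

/-- Bernoulli-type telescoping inequality. -/
private lemma telescope_aux {a x : ℝ} (ha : 1 < a) (hx : 0 < x) :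
    (x + 1) ^ (-a) ≤ (a - 1)⁻¹ * (x ^ (1 - a) - (x + 1) ^ (1 - a)) := by
  have hx1 : (0:ℝ) < x + 1 := by linarith
  have ha1 : (0:ℝ) < a - 1 := by linarith
  have hlog : 1 / (x + 1) ≤ Real.log ((x + 1) / x) := by
    have h := Real.log_le_sub_one_of_pos (show (0:ℝ) < x / (x + 1) by positivity)
    rw [Real.log_div hx.ne' hx1.ne'] at h
    rw [Real.log_div hx1.ne' hx.ne']
    have : x / (x + 1) - 1 = -(1 / (x + 1)) := by field_simp; ring
    rw [this] at h; linarith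
  have key : 1 + (a - 1) / (x + 1) ≤ ((x + 1) / x) ^ (a - 1) := by
    rw [Real.rpow_def_of_pos (by positivity)]
    calc 1 + (a - 1) / (x + 1) ≤ Real.exp ((a - 1) / (x + 1)) := by
          have := Real.add_one_le_exp ((a - 1) / (x + 1)); linarith
      _ ≤ Real.exp (Real.log ((x + 1) / x) * (a - 1)) := by
          apply Real.exp_le_exp.2
          have h2 := mul_le_mul_of_nonneg_left hlog ha1.le
          calc (a - 1) / (x + 1) = (a - 1) * (1 / (x + 1)) := by ring
            _ ≤ (a - 1) * Real.log ((x + 1) / x) := h2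
            _ = Real.log ((x + 1) / x) * (a - 1) := by ring
  have hpow : ((x + 1) / x) ^ (a - 1) * (x + 1) ^ (1 - a) = x ^ (1 - a) := by
    rw [Real.div_rpow hx1.le hx.le, div_mul_eq_mul_div, ← Real.rpow_add hx1,
      show a - 1 + (1 - a) = 0 by ring, Real.rpow_zero]
    rw [one_div, ← Real.rpow_neg hx.le, show -(a - 1) = 1 - a by ring]
  have hmul := mul_le_mul_of_nonneg_right key (Real.rpow_nonneg hx1.le (1 - a))
  rw [hpow] at hmul
  have hsplit : (x + 1) ^ (1 - a) = (x + 1) * (x + 1) ^ (-a) := by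
    rw [show (1:ℝ) - a = 1 + -a by ring,
      Real.rpow_one_add' hx1.le (by intro h; linarith : (1:ℝ) + -a ≠ 0)]
  have hexp : (1 + (a - 1) / (x + 1)) * (x + 1) ^ (1 - a)
      = (x + 1) ^ (1 - a) + (a - 1) * (x + 1) ^ (-a) := by
    rw [hsplit]; field_simp
  rw [hexp] at hmul
  rw [inv_mul_eq_div, le_div_iff₀ ha1]
  nlinarith [hmul]

/-- For α > 2 and an integer k > ⌈α/2⌉, the series ∑_{i=k+1}^∞ Γ(i − α/2)/Γ(i) converges
and is bounded above by (α/2 − 1)⁻¹ (k − ⌈α/2⌉)^(1 − α/2). -/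
theorem gamma_ratio_tail_sum (α : ℝ) (hα : 2 < α) (k : ℤ) (hk : ⌈α / 2⌉ < k) :
    Summable (fun n : ℕ => Real.Gamma (((k : ℝ) + 1 + n) - α / 2) / Real.Gamma ((k : ℝ) + 1 + n)) ∧
    (∑' n : ℕ, Real.Gamma (((k : ℝ) + 1 + n) - α / 2) / Real.Gamma ((k : ℝ) + 1 + n)) ≤
      (α / 2 - 1)⁻¹ * ((k : ℝ) - (⌈α / 2⌉ : ℤ)) ^ (1 - α / 2) := by
  set a : ℝ := α / 2 with ha_def
  have ha : 1 < a := by rw [ha_def]; linarith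
  set m : ℤ := ⌈a⌉ with hm_def
  have ham : a ≤ m := Int.le_ceil a
  have hma : (m : ℝ) - 1 < a := by
    have := Int.ceil_lt_add_one (R := ℝ) a
    push_cast at this ⊢; linarith
  have hm1 : (1:ℝ) < m := by linarith
  have hm0 : 0 ≤ m := by exact_mod_cast (by linarith : (0:ℝ) ≤ (m:ℝ))
  have hkm : (1:ℝ) ≤ (k : ℝ) - m := by
    have : m + 1 ≤ k := hk
    have : ((m:ℝ) + 1) ≤ k := by exact_mod_cast this
    linarith
  set K : ℝ := (k : ℝ) - m with hK_def
  set M : ℕ := m.toNat with hM_def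
  have hMm : (M : ℝ) = (m : ℝ) := by
    rw [hM_def]; exact_mod_cast Int.toNat_of_nonneg hm0
  set θ : ℝ := (m : ℝ) - a with hθ_def
  have hθ0 : 0 ≤ θ := by rw [hθ_def]; linarith
  have hθ1 : θ ≤ 1 := by rw [hθ_def]; linarith
  -- per-term bound
  have term_bound : ∀ n : ℕ,
      Real.Gamma (((k : ℝ) + 1 + n) - a) / Real.Gamma ((k : ℝ) + 1 + n)
        ≤ (a - 1)⁻¹ * ((K + n) ^ (1 - a) - (K + n + 1) ^ (1 - a)) := by
    intro n
    set x : ℝ := K + 1 + n with hx_def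
    have hxpos : 0 < x := by rw [hx_def]; positivity
    have harg1 : ((k : ℝ) + 1 + n) - a = x + θ := by rw [hx_def, hθ_def, hK_def]; ring
    have harg2 : ((k : ℝ) + 1 + n) = x + M := by rw [hx_def, hMm, hK_def]; ring
    have hΓx : 0 < Real.Gamma x := Real.Gamma_pos_of_pos hxpos
    have hΓd : 0 < Real.Gamma (x + M) := Real.Gamma_pos_of_pos (by positivity)
    have h1 : Real.Gamma (x + θ) ≤ Real.Gamma x * x ^ θ := gamma_aux_A hxpos hθ0 hθ1
    have h2 : Real.Gamma x * x ^ M ≤ Real.Gamma (x + M) := gamma_aux_B hxpos M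
    have hratio : Real.Gamma (x + θ) / Real.Gamma (x + M) ≤ x ^ (-a) := by
      have hxM : (0:ℝ) < Real.Gamma x * x ^ M := by positivity
      have h2' : Real.Gamma x * x ^ (M:ℝ) ≤ Real.Gamma (x + M) := by
        rw [Real.rpow_natCast]; exact h2
      calc Real.Gamma (x + θ) / Real.Gamma (x + M)
          ≤ (Real.Gamma x * x ^ θ) / (Real.Gamma x * x ^ (M:ℝ)) := by
            exact div_le_div₀ (by positivity) h1 (by positivity) h2'
        _ = x ^ θ / x ^ (M : ℝ) := by
            rw [mul_div_mul_left _ _ hΓx.ne']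
        _ = x ^ (θ - (M:ℝ)) := by rw [← Real.rpow_sub hxpos]
        _ = x ^ (-a) := by rw [hMm, hθ_def]; ring_nf
    have htel : x ^ (-a) ≤ (a - 1)⁻¹ * ((K + n) ^ (1 - a) - (K + n + 1) ^ (1 - a)) := by
      have := telescope_aux ha (show (0:ℝ) < K + n by positivity)
      have hx2 : x = (K + n) + 1 := by rw [hx_def]; ring
      rw [hx2]; exact this
    calc Real.Gamma (((k : ℝ) + 1 + n) - a) / Real.Gamma ((k : ℝ) + 1 + n)
        = Real.Gamma (x + θ) / Real.Gamma (x + M) := by rw [harg1, harg2]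
      _ ≤ x ^ (-a) := hratio
      _ ≤ _ := htel
  -- nonnegativity of terms
  have hnn : ∀ n : ℕ, 0 ≤ Real.Gamma (((k : ℝ) + 1 + n) - a) / Real.Gamma ((k : ℝ) + 1 + n) := by
    intro n
    have h1 : (0:ℝ) < ((k : ℝ) + 1 + n) - a := by
      have : a < (k:ℝ) := by linarith
      push_cast; linarith [Nat.cast_nonneg (α := ℝ) n]
    have h2 : (0:ℝ) < (k : ℝ) + 1 + n := by linarith
    exact div_nonneg (Real.Gamma_pos_of_pos h1).le (Real.Gamma_pos_of_pos h2).le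
  -- partial sum bound
  have hps : ∀ N : ℕ, ∑ n ∈ Finset.range N,
      Real.Gamma (((k : ℝ) + 1 + n) - a) / Real.Gamma ((k : ℝ) + 1 + n)
        ≤ (a - 1)⁻¹ * K ^ (1 - a) := by
    intro N
    have h1 : ∑ n ∈ Finset.range N,
        Real.Gamma (((k : ℝ) + 1 + n) - a) / Real.Gamma ((k : ℝ) + 1 + n)
        ≤ ∑ n ∈ Finset.range N,
          (a - 1)⁻¹ * ((K + n) ^ (1 - a) - (K + n + 1) ^ (1 - a)) :=
      Finset.sum_le_sum fun n _ => term_bound n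
    have h2 : ∑ n ∈ Finset.range N,
        (a - 1)⁻¹ * ((K + n) ^ (1 - a) - (K + n + 1) ^ (1 - a))
        = (a - 1)⁻¹ * (K ^ (1 - a) - (K + N) ^ (1 - a)) := by
      rw [← Finset.mul_sum]
      congr 1
      have := Finset.sum_range_sub' (fun n : ℕ => (K + n) ^ (1 - a)) N
      simp only [Nat.cast_add, Nat.cast_one, Nat.cast_zero, add_zero] at this ⊢
      rw [← this]
      apply Finset.sum_congr rfl
      intro i _
      push_cast
      ring_nf
    have h3 : (a - 1)⁻¹ * (K ^ (1 - a) - (K + N) ^ (1 - a)) ≤ (a - 1)⁻¹ * K ^ (1 - a) := by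
      apply mul_le_mul_of_nonneg_left _ (inv_nonneg.2 (by linarith))
      have : (0:ℝ) ≤ (K + N) ^ (1 - a) := Real.rpow_nonneg (by have := Nat.cast_nonneg (α := ℝ) N; linarith) _
      linarith
    linarith
  constructor
  · exact summable_of_sum_range_le hnn hps
  · exact Real.tsum_le_of_sum_range_le hnn hps
end

section
/- Let S ~ χ²_{2(n−k)} (density x^{n−k−1}e^{−x}/(n−k−1)!) and let I ≥ 0 be a random variable independent of S with E[I] ≤ (πd²λ)^{α/2}(α/2 − 1)^{−1}(k − ⌈α/2⌉)^{1−α/2}, where α > 2, d, λ > 0, ⌈α/2⌉ < k < n − 1 are integers. Then for any β > 0 and SNR > 0, P[S/(1/SNR + I) ≤ β] ≤ β((πd²λ)^{α/2}(α/2 − 1)^{−1}(k − ⌈α/2⌉)^{1−α/2} + 1/SNR)/(n − k − 1). -/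
open MeasureTheory ProbabilityTheory Real

lemma lint_pow_mul_exp (j : ℕ) :
    ∫⁻ x in Set.Ioi (0:ℝ), ENNReal.ofReal (x ^ j * Real.exp (-x)) =
      ENNReal.ofReal (Nat.factorial j) := by
  have h1 : ∀ x ∈ Set.Ioi (0:ℝ),
      Real.exp (-x) * x ^ (((j:ℝ)+1) - 1) = x ^ j * Real.exp (-x) := by
    intro x hx
    rw [add_sub_cancel_right, Real.rpow_natCast, mul_comm]
  have hint : IntegrableOn (fun x : ℝ => x ^ j * Real.exp (-x)) (Set.Ioi 0) := by
    have h := Real.GammaIntegral_convergent (s := (j:ℝ)+1) (by positivity)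
    exact h.congr_fun h1 measurableSet_Ioi
  have hval : ∫ x in Set.Ioi (0:ℝ), x ^ j * Real.exp (-x) = (Nat.factorial j : ℝ) := by
    have h := Real.Gamma_eq_integral (s := (j:ℝ)+1) (by positivity)
    have h2 : Real.Gamma ((j:ℝ)+1) = (Nat.factorial j : ℝ) := by
      exact_mod_cast Real.Gamma_nat_eq_factorial j
    rw [h2] at h
    rw [h]
    exact (setIntegral_congr_fun measurableSet_Ioi h1).symm
  rw [← ofReal_integral_eq_lintegral_ofReal hint ((ae_restrict_iff' measurableSet_Ioi).2
    (ae_of_all _ fun x hx => mul_nonneg (pow_nonneg (le_of_lt hx) _) (Real.exp_pos _).le)), hval]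

lemma chisq_cdf_bound (m : ℕ) (hm : 2 ≤ m) (t : ℝ) (ht : 0 ≤ t) :
    (volume.withDensity (fun x => ENNReal.ofReal
      (if 0 < x then x ^ (m - 1) * Real.exp (-x) / (Nat.factorial (m - 1) : ℝ) else 0)))
      (Set.Iic t) ≤ ENNReal.ofReal (t / ((m:ℝ) - 1)) := by
  rw [withDensity_apply _ measurableSet_Iic]
  have hfac : (Nat.factorial (m - 1) : ℝ) = ((m:ℝ) - 1) * (Nat.factorial (m - 2) : ℝ) := by
    have h1 : m - 1 = (m - 2) + 1 := by omega
    rw [h1, Nat.factorial_succ]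
    push_cast
    have : ((m - 2 : ℕ) : ℝ) = (m:ℝ) - 2 := by
      have : (2:ℝ) ≤ (m:ℝ) := by exact_mod_cast hm
      push_cast [Nat.cast_sub hm]; ring
    rw [this]; ring
  have hm1 : (0:ℝ) < (m:ℝ) - 1 := by
    have : (2:ℝ) ≤ (m:ℝ) := by exact_mod_cast hm
    linarith
  have step1 : ∫⁻ x in Set.Iic t, ENNReal.ofReal
      (if 0 < x then x ^ (m - 1) * Real.exp (-x) / (Nat.factorial (m - 1) : ℝ) else 0)
      ≤ ∫⁻ x in Set.Iic t, ENNReal.ofReal (t / (Nat.factorial (m - 1) : ℝ)) *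
          ENNReal.ofReal (if 0 < x then x ^ (m - 2) * Real.exp (-x) else 0) := by
    apply setLIntegral_mono' measurableSet_Iic
    intro x hx
    rw [← ENNReal.ofReal_mul (by positivity)]
    apply ENNReal.ofReal_le_ofReal
    by_cases h0 : 0 < x
    · simp only [if_pos h0]
      have hxt : x ≤ t := hx
      have hpow : x ^ (m - 1) = x ^ (m - 2) * x := by
        rw [← pow_succ]
        congr 1
        omega
      rw [hpow]
      rw [div_le_iff₀ (by positivity : (0:ℝ) < (Nat.factorial (m-1) : ℝ))] at *
      have hnn : 0 ≤ x ^ (m - 2) * Real.exp (-x) := by positivity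
      calc x ^ (m - 2) * x * Real.exp (-x)
          ≤ x ^ (m - 2) * t * Real.exp (-x) := by nlinarith [Real.exp_pos (-x), pow_nonneg h0.le (m-2)]
        _ = t / (Nat.factorial (m-1) : ℝ) * (x ^ (m - 2) * Real.exp (-x)) * (Nat.factorial (m-1) : ℝ) := by
            field_simp
    · simp [if_neg h0]
  have step2 : ∫⁻ x in Set.Iic t, ENNReal.ofReal (t / (Nat.factorial (m - 1) : ℝ)) *
        ENNReal.ofReal (if 0 < x then x ^ (m - 2) * Real.exp (-x) else 0)
      ≤ ENNReal.ofReal (t / (Nat.factorial (m - 1) : ℝ)) *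
        ∫⁻ x, ENNReal.ofReal (if 0 < x then x ^ (m - 2) * Real.exp (-x) else 0) := by
    rw [lintegral_const_mul]
    · exact mul_le_mul_right (setLIntegral_le_lintegral _ _) _
    · apply Measurable.ennreal_ofReal
      apply Measurable.ite measurableSet_Ioi
      · fun_prop
      · fun_prop
  have step3 : ∫⁻ x : ℝ, ENNReal.ofReal (if 0 < x then x ^ (m - 2) * Real.exp (-x) else 0)
      = ENNReal.ofReal (Nat.factorial (m - 2) : ℝ) := by
    have hind : (fun x : ℝ => ENNReal.ofReal (if 0 < x then x ^ (m - 2) * Real.exp (-x) else 0))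
        = Set.indicator (Set.Ioi 0) (fun x => ENNReal.ofReal (x ^ (m - 2) * Real.exp (-x))) := by
      ext x
      by_cases h : 0 < x
      · simp [Set.indicator, h]
      · simp [Set.indicator, h]
    rw [hind, lintegral_indicator measurableSet_Ioi]
    exact lint_pow_mul_exp (m - 2)
  refine le_trans (le_trans step1 step2) (le_of_eq ?_)
  rw [step3, ← ENNReal.ofReal_mul (by positivity)]
  congr 1
  rw [hfac]
  field_simp

/-- Outage bound for the PZF receiver: S is χ²_{2(n−k)} distributed, I ≥ 0 independent of S
with mean bounded by (πd²λ)^(α/2)(α/2−1)⁻¹(k−⌈α/2⌉)^(1−α/2); then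
P[S/(1/SNR + I) ≤ β] ≤ β((πd²λ)^(α/2)(α/2−1)⁻¹(k−⌈α/2⌉)^(1−α/2) + 1/SNR)/(n−k−1). -/
theorem pzf_outage_bound {Ω : Type*} [MeasurableSpace Ω] (μ : Measure Ω)
    [IsProbabilityMeasure μ] (S I : Ω → ℝ) (hS : Measurable S) (hI : Measurable I)
    (n k : ℕ) (α d lam β SNR : ℝ)
    (hα : 2 < α) (hd : 0 < d) (hlam : 0 < lam) (hβ : 0 < β) (hSNR : 0 < SNR)
    (hk : (⌈α / 2⌉ : ℤ) < (k : ℤ)) (hkn : k + 1 < n)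
    (hSdist : Measure.map S μ = volume.withDensity (fun x => ENNReal.ofReal
      (if 0 < x then x ^ (n - k - 1) * Real.exp (-x) / (Nat.factorial (n - k - 1) : ℝ) else 0)))
    (hindep : IndepFun S I μ)
    (hInn : ∀ᵐ ω ∂μ, 0 ≤ I ω) (hIint : Integrable I μ)
    (hImean : ∫ ω, I ω ∂μ ≤
      (Real.pi * d ^ 2 * lam) ^ (α / 2) * (α / 2 - 1)⁻¹ *
        ((k : ℝ) - (⌈α / 2⌉ : ℤ)) ^ (1 - α / 2)) :
    μ {ω | S ω / (1 / SNR + I ω) ≤ β} ≤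
      ENNReal.ofReal (β * ((Real.pi * d ^ 2 * lam) ^ (α / 2) * (α / 2 - 1)⁻¹ *
          ((k : ℝ) - (⌈α / 2⌉ : ℤ)) ^ (1 - α / 2) + 1 / SNR) / ((n : ℝ) - k - 1)) := by
  set C := (Real.pi * d ^ 2 * lam) ^ (α / 2) * (α / 2 - 1)⁻¹ *
      ((k : ℝ) - (⌈α / 2⌉ : ℤ)) ^ (1 - α / 2) with hC
  set m := n - k with hm
  have hm2 : 2 ≤ m := by omega
  have hmcast : ((m:ℝ) - 1) = (n:ℝ) - k - 1 := by
    rw [hm, Nat.cast_sub (by omega : k ≤ n)]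
  have hm1 : (0:ℝ) < (m:ℝ) - 1 := by
    have : (2:ℝ) ≤ (m:ℝ) := by exact_mod_cast hm2
    linarith
  have hCpos : 0 < C := by
    rw [hC]
    have h1 : (0:ℝ) < (α / 2 - 1)⁻¹ := by
      rw [inv_pos]; linarith
    have h2 : (0:ℝ) < (k : ℝ) - (⌈α / 2⌉ : ℤ) := by
      have : ((⌈α/2⌉ : ℤ) : ℝ) < (k:ℝ) := by exact_mod_cast hk
      linarith
    have h3 : (0:ℝ) < Real.pi * d ^ 2 * lam := by positivity
    exact mul_pos (mul_pos (Real.rpow_pos_of_pos h3 _) h1) (Real.rpow_pos_of_pos h2 _)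
  -- step 1: reduce to event S ≤ β (1/SNR + I)
  have hsub : μ {ω | S ω / (1 / SNR + I ω) ≤ β} ≤ μ {ω | S ω ≤ β * (1 / SNR + I ω)} := by
    apply measure_mono_ae
    filter_upwards [hInn] with ω hω h
    have hpos : 0 < 1 / SNR + I ω := by positivity
    exact (div_le_iff₀ hpos).mp h
  -- step 2: independence
  have hmap : μ.map (fun ω => (I ω, S ω)) = (μ.map I).prod (μ.map S) :=
    (indepFun_iff_map_prod_eq_prod_map_map hI.aemeasurable hS.aemeasurable).mp hindep.symm
  have hsetm : MeasurableSet {p : ℝ × ℝ | p.2 ≤ β * (1 / SNR + p.1)} := by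
    apply measurableSet_le measurable_snd
    fun_prop
  have key : μ {ω | S ω ≤ β * (1 / SNR + I ω)} =
      ∫⁻ y, (μ.map S) {x | x ≤ β * (1 / SNR + y)} ∂(μ.map I) := by
    have hpre : {ω | S ω ≤ β * (1 / SNR + I ω)} =
        (fun ω => (I ω, S ω)) ⁻¹' {p : ℝ × ℝ | p.2 ≤ β * (1 / SNR + p.1)} := rfl
    rw [hpre, ← Measure.map_apply (hI.prodMk hS) hsetm, hmap, Measure.prod_apply hsetm]
    rfl
  have hInn' : ∀ᵐ y ∂(μ.map I), 0 ≤ y :=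
    (ae_map_iff hI.aemeasurable measurableSet_Ici).mpr hInn
  have hbound : ∫⁻ y, (μ.map S) {x | x ≤ β * (1 / SNR + y)} ∂(μ.map I)
      ≤ ∫⁻ y, ENNReal.ofReal (β * (1 / SNR + y) / ((m:ℝ) - 1)) ∂(μ.map I) := by
    apply lintegral_mono_ae
    filter_upwards [hInn'] with y hy
    have ht : 0 ≤ β * (1 / SNR + y) := by positivity
    have hIic : {x : ℝ | x ≤ β * (1 / SNR + y)} = Set.Iic (β * (1 / SNR + y)) := rfl
    rw [hIic, hSdist]
    exact chisq_cdf_bound m hm2 _ ht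
  -- step 3: compute rhs integral
  have hPI : IsProbabilityMeasure (μ.map I) := Measure.isProbabilityMeasure_map hI.aemeasurable
  have hid : Integrable (fun y : ℝ => y) (μ.map I) :=
    (integrable_map_measure aestronglyMeasurable_id hI.aemeasurable).mpr hIint
  have hint2 : Integrable (fun y : ℝ => β * (1 / SNR + y) / ((m:ℝ) - 1)) (μ.map I) :=
    (((integrable_const (1 / SNR)).add hid).const_mul β).div_const _
  have hnn : 0 ≤ᵐ[μ.map I] fun y => β * (1 / SNR + y) / ((m:ℝ) - 1) := by
    filter_upwards [hInn'] with y hy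
    positivity
  have heq : ∫⁻ y, ENNReal.ofReal (β * (1 / SNR + y) / ((m:ℝ) - 1)) ∂(μ.map I)
      = ENNReal.ofReal (∫ y, β * (1 / SNR + y) / ((m:ℝ) - 1) ∂(μ.map I)) :=
    (ofReal_integral_eq_lintegral_ofReal hint2 hnn).symm
  have hval : ∫ y, β * (1 / SNR + y) / ((m:ℝ) - 1) ∂(μ.map I)
      = β * (1 / SNR + ∫ ω, I ω ∂μ) / ((m:ℝ) - 1) := by
    rw [integral_div, integral_const_mul, integral_add (integrable_const _) hid,
      integral_const]
    simp only [measure_univ, probReal_univ, ENNReal.toReal_one, smul_eq_mul, one_mul]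
    rw [show (∫ y, y ∂(μ.map I)) = ∫ ω, I ω ∂μ from
      integral_map hI.aemeasurable aestronglyMeasurable_id]
  have hfinal : β * (1 / SNR + ∫ ω, I ω ∂μ) / ((m:ℝ) - 1) ≤ β * (C + 1 / SNR) / ((n:ℝ) - k - 1) := by
    rw [← hmcast]
    exact (div_le_div_iff_of_pos_right hm1).mpr (by nlinarith [hImean])
  calc μ {ω | S ω / (1 / SNR + I ω) ≤ β}
      ≤ μ {ω | S ω ≤ β * (1 / SNR + I ω)} := hsub
    _ = ∫⁻ y, (μ.map S) {x | x ≤ β * (1 / SNR + y)} ∂(μ.map I) := key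
    _ ≤ ∫⁻ y, ENNReal.ofReal (β * (1 / SNR + y) / ((m:ℝ) - 1)) ∂(μ.map I) := hbound
    _ = ENNReal.ofReal (∫ y, β * (1 / SNR + y) / ((m:ℝ) - 1) ∂(μ.map I)) := heq
    _ = ENNReal.ofReal (β * (1 / SNR + ∫ ω, I ω ∂μ) / ((m:ℝ) - 1)) := by rw [hval]
    _ ≤ ENNReal.ofReal (β * (C + 1 / SNR) / ((n:ℝ) - k - 1)) := ENNReal.ofReal_le_ofReal hfinal
end

section
/- For reals x > 0 and 0 < s < 1, Kershaw's inequality holds: Γ(x+1)/Γ(x+s) < (x − 1/2 + √(s + 1/4))^{1−s}. -/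
open Real

open Filter in
private lemma kershaw_key (s b : ℝ) (hb0 : 0 < b) (hs : b ^ 2 + b = s) (hs1 : s < 1)
    (y : ℝ) (hy : 0 < y) :
    ((y + (b + 1)) / (y + b)) ^ (1 - s) < (y + 1) / (y + s) := by
  have hs0 : 0 < s := by nlinarith
  have hb1 : b < 1 := by nlinarith
  set g : ℝ → ℝ := fun t =>
    (Real.log (t + 1) - Real.log (t + s)) - (1 - s) * (Real.log (t + (b + 1)) - Real.log (t + b))
    with hg
  have hlog : ∀ (c t : ℝ), 0 < t + c → HasDerivAt (fun u => Real.log (u + c)) (t + c)⁻¹ t := by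
    intro c t h
    have := (Real.hasDerivAt_log (ne_of_gt h)).comp t ((hasDerivAt_id t).add_const c)
    simpa [Function.comp_def] using this
  have hderiv : ∀ t : ℝ, 0 ≤ t → HasDerivAt g
      (((t + 1)⁻¹ - (t + s)⁻¹) - (1 - s) * ((t + (b + 1))⁻¹ - (t + b)⁻¹)) t := by
    intro t ht
    exact ((hlog 1 t (by linarith)).sub (hlog s t (by linarith))).sub
      ((((hlog (b + 1) t (by linarith)).sub (hlog b t (by linarith)))).const_mul (1 - s))
  have hanti : StrictAntiOn g (Set.Ici 0) := by
    apply strictAntiOn_of_deriv_neg (convex_Ici 0)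
    · exact fun t ht => (hderiv t ht).continuousAt.continuousWithinAt
    · intro t ht
      rw [interior_Ici] at ht
      have ht : (0:ℝ) < t := ht
      rw [(hderiv t ht.le).deriv]
      have p1 : (0:ℝ) < t + 1 := by linarith
      have p2 : (0:ℝ) < t + s := by linarith
      have p3 : (0:ℝ) < t + b := by linarith
      have p4 : (0:ℝ) < t + (b + 1) := by linarith
      have e1 : (t + 1)⁻¹ - (t + s)⁻¹ = -((1 - s) / ((t + 1) * (t + s))) := by
        field_simp; ring
      have e2 : (t + (b + 1))⁻¹ - (t + b)⁻¹ = -(1 / ((t + b) * (t + (b + 1)))) := by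
        field_simp; ring
      rw [e1, e2]
      have hprod : (t + 1) * (t + s) < (t + b) * (t + (b + 1)) := by nlinarith [mul_pos (mul_pos ht hb0) (show (0:ℝ) < 1 - b by linarith)]
      have h5 : (1 - s) / ((t + b) * (t + (b + 1))) < (1 - s) / ((t + 1) * (t + s)) := by
        apply div_lt_div_of_pos_left (by linarith) (by positivity) hprod
      have : -((1 - s) / ((t + 1) * (t + s))) - (1 - s) * -(1 / ((t + b) * (t + (b + 1))))
          = (1 - s) / ((t + b) * (t + (b + 1))) - (1 - s) / ((t + 1) * (t + s)) := by
        ring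
      rw [this]; linarith
  have htend : Tendsto g atTop (nhds 0) := by
    have hr : ∀ (c d : ℝ), Tendsto (fun t : ℝ => Real.log (t + c) - Real.log (t + d))
        atTop (nhds 0) := by
      intro c d
      have h1 : Tendsto (fun t : ℝ => (t + c) / (t + d)) atTop (nhds 1) := by
        have h0 : Tendsto (fun t : ℝ => (c - d) / (t + d)) atTop (nhds 0) :=
          Tendsto.div_atTop tendsto_const_nhds (tendsto_atTop_add_const_right _ d tendsto_id)
        have := h0.const_add 1
        rw [add_zero] at this
        apply this.congr'
        filter_upwards [eventually_gt_atTop (-d)] with t ht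
        have : (0:ℝ) < t + d := by linarith
        field_simp; ring
      have h2 : Tendsto (fun t : ℝ => Real.log ((t + c) / (t + d))) atTop (nhds 0) := by
        have := h1.log one_ne_zero
        rwa [Real.log_one] at this
      apply h2.congr'
      filter_upwards [eventually_gt_atTop (max (-c) (-d))] with t ht
      have hc : (0:ℝ) < t + c := by have := lt_of_le_of_lt (le_max_left (-c) (-d)) ht; linarith
      have hd : (0:ℝ) < t + d := by have := lt_of_le_of_lt (le_max_right (-c) (-d)) ht; linarith
      rw [Real.log_div (ne_of_gt hc) (ne_of_gt hd)]
    have := (hr 1 s).sub ((hr (b + 1) b).const_mul (1 - s))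
    simpa using this
  have hpos : 0 < g y := by
    have h1 : g (y + 1) < g y := hanti (le_of_lt (by linarith : (0:ℝ) < y)) (by simp; linarith) (by linarith)
    have h2 : (0:ℝ) ≤ g (y + 1) := by
      apply le_of_tendsto htend
      filter_upwards [eventually_ge_atTop (y + 1)] with t ht
      exact hanti.antitoneOn (by simp; linarith) (by simp; linarith) ht
    linarith
  -- convert to exponential form
  have p1 : (0:ℝ) < y + 1 := by linarith
  have p2 : (0:ℝ) < y + s := by linarith
  have p3 : (0:ℝ) < y + b := by linarith
  have p4 : (0:ℝ) < y + (b + 1) := by linarith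
  have hppos : (0:ℝ) < (y + (b + 1)) / (y + b) := by positivity
  rw [Real.rpow_def_of_pos hppos]
  rw [show (y + 1) / (y + s) = Real.exp (Real.log ((y + 1) / (y + s))) from
    (Real.exp_log (by positivity)).symm]
  apply Real.exp_lt_exp.2
  rw [Real.log_div (ne_of_gt p4) (ne_of_gt p3), Real.log_div (ne_of_gt p1) (ne_of_gt p2)]
  have := hpos
  rw [hg] at this
  simp only at this
  linarith

open Filter in
private lemma kershaw_wendel (s : ℝ) (hs0 : 0 < s) (hs1 : s < 1) (y : ℝ) (hy : 0 < y) :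
    Real.Gamma (y + 1) / Real.Gamma (y + s) ≤ (y + s) ^ (1 - s) := by
  have p2 : (0:ℝ) < y + s := by linarith
  have hG2 : 0 < Real.Gamma (y + s) := Real.Gamma_pos_of_pos p2
  have hG1 : 0 < Real.Gamma (y + 1) := Real.Gamma_pos_of_pos (by linarith)
  have hconv := Real.convexOn_log_Gamma.2 (Set.mem_Ioi.2 p2)
    (Set.mem_Ioi.2 (show (0:ℝ) < y + s + 1 by linarith))
    hs0.le (by linarith : (0:ℝ) ≤ 1 - s) (by ring)
  simp only [smul_eq_mul, Function.comp_apply] at hconv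
  have harg : s * (y + s) + (1 - s) * (y + s + 1) = y + 1 := by ring
  rw [harg] at hconv
  have hGadd : Real.Gamma (y + s + 1) = (y + s) * Real.Gamma (y + s) :=
    Real.Gamma_add_one (ne_of_gt p2)
  rw [hGadd, Real.log_mul (ne_of_gt p2) (ne_of_gt hG2)] at hconv
  have key : Real.log (Real.Gamma (y + 1)) ≤
      Real.log (Real.Gamma (y + s)) + (1 - s) * Real.log (y + s) := by linarith
  rw [div_le_iff₀ hG2]
  calc Real.Gamma (y + 1) = Real.exp (Real.log (Real.Gamma (y + 1))) := (Real.exp_log hG1).symm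
    _ ≤ Real.exp (Real.log (Real.Gamma (y + s)) + (1 - s) * Real.log (y + s)) :=
        Real.exp_le_exp.2 key
    _ = Real.Gamma (y + s) * (y + s) ^ (1 - s) := by
        rw [Real.exp_add, Real.exp_log hG2, Real.rpow_def_of_pos p2]
        ring_nf
    _ = (y + s) ^ (1 - s) * Real.Gamma (y + s) := mul_comm _ _

open Filter in
private lemma kershaw_step (s b : ℝ) (hb0 : 0 < b) (hs : b ^ 2 + b = s) (hs1 : s < 1)
    (y : ℝ) (hy : 0 < y) :
    Real.Gamma (y + 1) / Real.Gamma (y + s) / (y + b) ^ (1 - s) <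
      Real.Gamma (y + 1 + 1) / Real.Gamma (y + 1 + s) / (y + 1 + b) ^ (1 - s) := by
  have hs0 : 0 < s := by nlinarith
  have p1 : (0:ℝ) < y + 1 := by linarith
  have p2 : (0:ℝ) < y + s := by linarith
  have p3 : (0:ℝ) < y + b := by linarith
  have p4 : (0:ℝ) < y + 1 + b := by linarith
  have hG1 : 0 < Real.Gamma (y + 1) := Real.Gamma_pos_of_pos p1
  have hG2 : 0 < Real.Gamma (y + s) := Real.Gamma_pos_of_pos p2
  have e1 : Real.Gamma (y + 1 + 1) = (y + 1) * Real.Gamma (y + 1) :=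
    Real.Gamma_add_one (ne_of_gt p1)
  have e2 : Real.Gamma (y + 1 + s) = (y + s) * Real.Gamma (y + s) := by
    rw [show y + 1 + s = y + s + 1 by ring]
    exact Real.Gamma_add_one (ne_of_gt p2)
  rw [e1, e2]
  have key := kershaw_key s b hb0 hs hs1 y hy
  rw [Real.div_rpow (by linarith : (0:ℝ) ≤ y + (b+1)) p3.le] at key
  have hr3 : (0:ℝ) < (y + b) ^ (1 - s) := Real.rpow_pos_of_pos p3 _
  have hr4 : (0:ℝ) < (y + (b + 1)) ^ (1 - s) := Real.rpow_pos_of_pos (by linarith) _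
  have key2 : (y + (b + 1)) ^ (1 - s) * (y + s) < (y + 1) * (y + b) ^ (1 - s) := by
    rw [div_lt_div_iff₀ hr3 p2] at key
    linarith
  have e4 : y + 1 + b = y + (b + 1) := by ring
  rw [e4]
  rw [div_div, div_div, div_lt_div_iff₀ (by positivity) (by positivity)]
  have hA : 0 < Real.Gamma (y + 1) / 1 := by positivity
  calc Real.Gamma (y + 1) * ((y + s) * Real.Gamma (y + s) * (y + (b + 1)) ^ (1 - s))
      = (Real.Gamma (y + 1) * Real.Gamma (y + s)) * ((y + (b + 1)) ^ (1 - s) * (y + s)) := by ring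
    _ < (Real.Gamma (y + 1) * Real.Gamma (y + s)) * ((y + 1) * (y + b) ^ (1 - s)) := by
        apply mul_lt_mul_of_pos_left key2 (by positivity)
    _ = (y + 1) * Real.Gamma (y + 1) * (Real.Gamma (y + s) * (y + b) ^ (1 - s)) := by ring

open Filter in
/-- Kershaw's inequality: for x > 0 and 0 < s < 1,
Γ(x+1)/Γ(x+s) < (x − 1/2 + √(s + 1/4))^(1−s). -/
theorem kershaw_inequality (x s : ℝ) (hx : 0 < x) (hs0 : 0 < s) (hs1 : s < 1) :
    Real.Gamma (x + 1) / Real.Gamma (x + s) <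
      (x - 1 / 2 + Real.sqrt (s + 1 / 4)) ^ (1 - s) := by
  set b : ℝ := Real.sqrt (s + 1 / 4) - 1 / 2 with hbdef
  have hsq : Real.sqrt (s + 1 / 4) ^ 2 = s + 1 / 4 := Real.sq_sqrt (by linarith)
  have hb0 : 0 < b := by
    have h12 : (1 / 2 : ℝ) < Real.sqrt (s + 1 / 4) := by
      nlinarith [Real.sqrt_nonneg (s + 1 / 4)]
    simp only [hbdef]; linarith
  have hbs : b ^ 2 + b = s := by simp only [hbdef]; nlinarith
  have hgoal : x - 1 / 2 + Real.sqrt (s + 1 / 4) = x + b := by simp only [hbdef]; ring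
  rw [hgoal]
  set f : ℝ → ℝ := fun y => Real.Gamma (y + 1) / Real.Gamma (y + s) / (y + b) ^ (1 - s) with hf
  have hstep : ∀ y : ℝ, 0 < y → f y < f (y + 1) := fun y hy =>
    kershaw_step s b hb0 hbs hs1 y hy
  have hmono : ∀ n : ℕ, f (x + 1) ≤ f (x + 1 + n) := by
    intro n
    induction n with
    | zero => simp
    | succ n ih =>
      have hpos : (0:ℝ) < x + 1 + n := by
        have := Nat.cast_nonneg (α := ℝ) n; linarith
      have h2 : f (x + 1 + n) < f (x + 1 + n + 1) := hstep _ hpos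
      push_cast
      calc f (x + 1) ≤ f (x + 1 + n) := ih
        _ ≤ f (x + 1 + ((n:ℝ) + 1)) := by
            rw [show x + 1 + ((n:ℝ) + 1) = x + 1 + n + 1 by ring]; exact h2.le
  have hub : ∀ n : ℕ, f (x + 1 + n) ≤ ((x + 1 + n + s) / (x + 1 + n + b)) ^ (1 - s) := by
    intro n
    have hy : (0:ℝ) < x + 1 + n := by have := Nat.cast_nonneg (α := ℝ) n; linarith
    have hw := kershaw_wendel s hs0 hs1 (x + 1 + n) hy
    rw [Real.div_rpow (by linarith) (by linarith)]
    rw [hf]; simp only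
    gcongr
  have hlim : Tendsto (fun n : ℕ => ((x + 1 + n + s) / (x + 1 + n + b)) ^ (1 - s))
      atTop (nhds 1) := by
    have h1 : Tendsto (fun n : ℕ => (x + 1 + n + s) / (x + 1 + n + b)) atTop (nhds 1) := by
      have h0 : Tendsto (fun n : ℕ => (s - b) / (x + 1 + n + b)) atTop (nhds 0) :=
        Tendsto.div_atTop tendsto_const_nhds
          (tendsto_atTop_add_const_right _ b
            (tendsto_atTop_add_const_left _ (x + 1) tendsto_natCast_atTop_atTop))
      have h2 := h0.const_add 1
      rw [add_zero] at h2
      apply h2.congr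
      intro n
      have hd : (0:ℝ) < x + 1 + n + b := by have := Nat.cast_nonneg (α := ℝ) n; linarith
      field_simp; ring
    have h3 := h1.rpow_const (p := 1 - s) (Or.inl one_ne_zero)
    simpa using h3
  have hle1 : f (x + 1) ≤ 1 :=
    ge_of_tendsto hlim (Filter.Eventually.of_forall fun n => le_trans (hmono n) (hub n))
  have hfin : f x < 1 := lt_of_lt_of_le (hstep x hx) hle1
  rw [hf] at hfin; simp only at hfin
  rwa [div_lt_one (Real.rpow_pos_of_pos (by linarith) _)] at hfin
end
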